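/- For any integer $a$ and positive integer $r$, the identity $\sum_{\eta \in \mu_r} \frac{\eta^a}{z - \eta w} = \frac{r\, z^{a-1-r\lfloor (a-1)/r\rfloor}\, w^{r-a+r\lfloor (a-1)/r\rfloor}}{z^r - w^r}$ holds in $\mathbb{C}(z,w)$, where $\mu_r$ is the group of complex $r$th roots of unity. -/

import Mathlib

noncomputable section

/-- The field of rational functions `ℂ(z, w)`; `z` is variable `0`, `w` is variable `1`. -/
abbrev KK : Type := FractionRing (MvPolynomial (Fin 2) ℂ)

def zz : KK := algebraMap (MvPolynomial (Fin 2) ℂ) KK (MvPolynomial.X 0)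
def ww : KK := algebraMap (MvPolynomial (Fin 2) ℂ) KK (MvPolynomial.X 1)
def cst (a : ℂ) : KK := algebraMap (MvPolynomial (Fin 2) ℂ) KK (MvPolynomial.C a)

open Polynomial Finset

lemma sum_pow_nthRoots (r : ℕ) (hr : 0 < r) (k : ℕ) :
    ∑ η ∈ nthRootsFinset r (1 : ℂ), η ^ k = if r ∣ k then (r : ℂ) else 0 := by
  obtain ⟨ζ, hζ⟩ : ∃ ζ : ℂ, IsPrimitiveRoot ζ r :=
    ⟨_, Complex.isPrimitiveRoot_exp r hr.ne'⟩
  have himg : nthRootsFinset r (1 : ℂ) = (Finset.range r).image (ζ ^ ·) := by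
    have := hζ.nthRoots_eq (α := 1) (a := (1:ℂ)) (one_pow r)
    classical
    rw [nthRootsFinset_def, this]
    simp [Finset.image, Multiset.range]
  rw [himg, Finset.sum_image (fun i hi j hj h => hζ.pow_inj (Finset.mem_range.1 hi) (Finset.mem_range.1 hj) h)]
  have : ∀ i, (ζ ^ i) ^ k = (ζ ^ k) ^ i := fun i => by rw [← pow_mul, ← pow_mul, mul_comm]
  simp_rw [this]
  by_cases hd : r ∣ k
  · rw [if_pos hd, (hζ.pow_eq_one_iff_dvd k).2 hd]
    simp
  · rw [if_neg hd, geom_sum_eq (fun h1 => hd ((hζ.pow_eq_one_iff_dvd k).1 h1)) r,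
      ← pow_mul, mul_comm, pow_mul, hζ.pow_eq_one, one_pow, sub_self, zero_div]

lemma cst_mul (x y : ℂ) : cst (x * y) = cst x * cst y := by simp [cst]
lemma cst_pow (x : ℂ) (n : ℕ) : cst (x ^ n) = (cst x) ^ n := by simp [cst]
lemma cst_one : cst 1 = 1 := by simp [cst]
lemma cst_zero : cst 0 = 0 := by simp [cst]
lemma cst_natCast (n : ℕ) : cst n = (n : KK) := by simp [cst]

lemma inj' : Function.Injective (algebraMap (MvPolynomial (Fin 2) ℂ) KK) :=
  IsFractionRing.injective _ _

lemma hne (η : ℂ) : zz - cst η * ww ≠ 0 := by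
  have : zz - cst η * ww = algebraMap (MvPolynomial (Fin 2) ℂ) KK
      (MvPolynomial.X 0 - MvPolynomial.C η * MvPolynomial.X 1) := by
    simp [zz, ww, cst, map_sub, map_mul]
  rw [this, map_ne_zero_iff _ inj']
  intro h
  have := congrArg (MvPolynomial.eval ![1, 0]) h
  simp at this

lemma hpow (r : ℕ) (hr : 0 < r) : zz ^ r - ww ^ r ≠ (0 : KK) := by
  have : zz ^ r - ww ^ r = algebraMap (MvPolynomial (Fin 2) ℂ) KK
      (MvPolynomial.X 0 ^ r - MvPolynomial.X 1 ^ r) := by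
    simp [zz, ww, map_sub, map_pow]
  rw [this, map_ne_zero_iff _ inj']
  intro h
  have := congrArg (MvPolynomial.eval ![2, 0]) h
  simp [hr.ne'] at this

lemma main' (r b : ℕ) (hr : 0 < r) (hb : b < r) :
    ∑ η ∈ nthRootsFinset r (1 : ℂ), cst (η ^ (b + 1)) / (zz - cst η * ww)
      = (r : KK) * zz ^ b * ww ^ (r - 1 - b) / (zz ^ r - ww ^ r) := by
  have key : ∀ η ∈ nthRootsFinset r (1 : ℂ), cst (η ^ (b + 1)) / (zz - cst η * ww)
      = (∑ j ∈ range r, cst (η ^ (b + r - j)) * (zz ^ j * ww ^ (r - 1 - j)))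
          / (zz ^ r - ww ^ r) := by
    intro η hη
    have hη1 : η ^ r = 1 := (mem_nthRootsFinset hr 1).1 hη
    rw [div_eq_div_iff (hne η) (hpow r hr)]
    have h2 : zz ^ r - ww ^ r
        = (∑ i ∈ range r, zz ^ i * (cst η * ww) ^ (r - 1 - i)) * (zz - cst η * ww) := by
      rw [geom_sum₂_mul, mul_pow, ← cst_pow, hη1, cst_one, one_mul]
    rw [h2, ← mul_assoc]
    congr 1
    rw [Finset.mul_sum]
    refine Finset.sum_congr rfl fun j hj => ?_
    have hj' : j < r := Finset.mem_range.1 hj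
    have he : b + r - j = (b + 1) + (r - 1 - j) := by omega
    rw [he]
    simp only [pow_add, pow_one, cst_mul, cst_pow, mul_pow]
    ring
  rw [Finset.sum_congr rfl key, ← Finset.sum_div]
  congr 1
  rw [Finset.sum_comm]
  have step : ∀ j ∈ range r,
      (∑ η ∈ nthRootsFinset r (1 : ℂ), cst (η ^ (b + r - j)) * (zz ^ j * ww ^ (r - 1 - j)))
        = cst (if r ∣ (b + r - j) then (r : ℂ) else 0) * (zz ^ j * ww ^ (r - 1 - j)) := by
    intro j hj
    rw [← Finset.sum_mul, ← sum_pow_nthRoots r hr]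
    congr 1
    simp [cst, map_sum]
  rw [Finset.sum_congr rfl step]
  rw [Finset.sum_eq_single_of_mem b (Finset.mem_range.2 hb)]
  · have : r ∣ b + r - b := by simp
    rw [if_pos this, cst_natCast]
    ring
  · intro j hj hjb
    have hj' : j < r := Finset.mem_range.1 hj
    have : ¬ r ∣ (b + r - j) := by
      intro hd
      obtain ⟨c, hc⟩ := hd
      have h0 : 0 < b + r - j := by omega
      have h1 : b + r - j < 2 * r := by omega
      rcases c with _ | _ | c
      · omega
      · omega
      · have : r * 2 ≤ r * (c + 1 + 1) := Nat.mul_le_mul_left r (by omega)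
        omega
    rw [if_neg this, cst_zero, zero_mul]

open Polynomial in
/-- For an integer `a` and `0 < r`,
`∑_{η^r = 1} η^a/(z - η w) = r z^(a-1-r⌊(a-1)/r⌋) w^(r-a+r⌊(a-1)/r⌋) / (z^r - w^r)`
in `ℂ(z,w)`.  (Note `a - 1 - r⌊(a-1)/r⌋ = (a-1) % r` and
`r - a + r⌊(a-1)/r⌋ = r - 1 - (a-1) % r`.) -/
theorem stmt8 (r : ℕ) (hr : 0 < r) (a : ℤ) :
    ∑ η ∈ nthRootsFinset r (1 : ℂ), cst (η ^ a) / (zz - cst η * ww)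
      = (r : KK) * zz ^ (a - 1 - r * ((a - 1) / r)).toNat
          * ww ^ ((r : ℤ) - a + r * ((a - 1) / r)).toNat / (zz ^ r - ww ^ r) := by

  set q : ℤ := (a - 1) / r with hq
  have hmod : (a - 1) % r = a - 1 - r * q := Int.emod_def _ _
  have hmnn : 0 ≤ (a - 1) % r := Int.emod_nonneg _ (by exact_mod_cast hr.ne')
  have hmlt : (a - 1) % r < r := Int.emod_lt_of_pos _ (by exact_mod_cast hr)
  set b : ℕ := ((a - 1) % r).toNat with hbdef
  have hbz : ((a - 1) % r) = (b : ℤ) := (Int.toNat_of_nonneg hmnn).symm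
  have hb : b < r := by omega
  have e1 : (a - 1 - r * q).toNat = b := by omega
  have e2 : ((r : ℤ) - a + r * q).toNat = r - 1 - b := by omega
  rw [e1, e2, ← main' r b hr hb]
  refine Finset.sum_congr rfl fun η hη => ?_
  have hη1 : η ^ r = 1 := (mem_nthRootsFinset hr 1).1 hη
  have hηne : η ≠ 0 := ne_zero_of_mem_nthRootsFinset one_ne_zero hη
  have ha : a = r * q + ((b : ℤ) + 1) := by omega
  rw [ha, zpow_add₀ hηne, zpow_mul, zpow_natCast, hη1, one_zpow, one_mul]
  norm_cast

end
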